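/- arXiv:2310.11565 — 7 statements merged into one kernel-verified Lean document; each statement's English description precedes it below -/
import Mathlib

section
/- If a graph G on n vertices has a general position orthogonal representation in R^D, then G is (n-D)-connected. -/
open scoped RealInnerProductSpace

/-- A graph is `k`-connected: more than `k` vertices, and deleting any set of
fewer than `k` vertices leaves a connected graph. -/
def IsKConnected {n : ℕ} (G : SimpleGraph (Fin n)) (k : ℕ) : Prop :=
  k < n ∧ ∀ S : Finset (Fin n), S.card < k →
    (G.induce ((↑S : Set (Fin n))ᶜ)).Connected

/-- if `G` on `n` vertices has a general position orthogonal
representation in `ℝ^D`, then `G` is `(n-D)`-connected. -/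
theorem stmt0 {n D : ℕ} (hD : 0 < D) (hDn : D ≤ n) (G : SimpleGraph (Fin n))
    (v : Fin n → EuclideanSpace ℝ (Fin D))
    (hOR : ∀ i j : Fin n, i ≠ j → ¬ G.Adj i j → ⟪v i, v j⟫ = 0)
    (hGP : ∀ s : Finset (Fin n), s.card = D →
      LinearIndependent ℝ (fun i : s => v i)) :
    IsKConnected G (n - D) := by
  classical
  -- any family over a finset of size ≤ D is linearly independent
  have hli_small : ∀ s : Finset (Fin n), s.card ≤ D →
      LinearIndependent ℝ (fun i : s => v i) := by
    intro s hs
    obtain ⟨t, hst, htD⟩ := Finset.exists_superset_card_eq hs (by simpa using hDn)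
    have ht := hGP t htD
    have heq : (fun i : s => v i) =
        (fun i : t => v i) ∘ (fun i : s => (⟨i.1, hst i.2⟩ : t)) := rfl
    rw [heq]
    refine ht.comp _ (fun a b hab => ?_)
    rw [Subtype.mk.injEq] at hab
    exact Subtype.ext hab
  constructor
  · omega
  · intro S hS
    have hScard : S.card + D + 1 ≤ n := by omega
    rw [SimpleGraph.connected_iff]
    have hcompl : ∀ i : Fin n, i ∈ ((↑S : Set (Fin n))ᶜ) ↔ i ∈ Sᶜ := by
      intro i; simp
    constructor
    · -- preconnected
      intro x y
      by_contra hxy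
      let C : Set (Fin n) := (↑S : Set (Fin n))ᶜ
      set A : Finset (Fin n) := Finset.univ.filter
        (fun i => ∃ h : i ∈ C, (G.induce C).Reachable x ⟨i, h⟩) with hAdef
      have hmemA : ∀ i : Fin n, i ∈ A ↔
          ∃ h : i ∈ C, (G.induce C).Reachable x ⟨i, h⟩ := by
        intro i; simp [hAdef]
      set B : Finset (Fin n) := Sᶜ \ A with hBdef
      have hAsub : A ⊆ Sᶜ := by
        intro i hi
        obtain ⟨h, -⟩ := (hmemA i).1 hi
        exact (hcompl i).1 h
      -- non-adjacency between A and B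
      have hnadj : ∀ a ∈ A, ∀ b ∈ B, ¬ G.Adj a b := by
        intro a ha b hb hadj
        obtain ⟨haC, hreach⟩ := (hmemA a).1 ha
        obtain ⟨hbSc, hbA⟩ := Finset.mem_sdiff.1 hb
        have hbC : b ∈ C := (hcompl b).2 hbSc
        have hadj' : (G.induce C).Adj ⟨a, haC⟩ ⟨b, hbC⟩ := by
          simpa using hadj
        exact hbA ((hmemA b).2 ⟨hbC, hreach.trans hadj'.reachable⟩)
      -- x ∈ A, y ∈ B
      have hxA : (x : Fin n) ∈ A := by
        refine (hmemA x).2 ⟨x.2, ?_⟩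
        exact SimpleGraph.Reachable.refl _
      have hyB : (y : Fin n) ∈ B := by
        refine Finset.mem_sdiff.2 ⟨(hcompl _).1 y.2, ?_⟩
        intro hy
        obtain ⟨hyC, hreach⟩ := (hmemA y).1 hy
        have heq : (⟨(y : Fin n), hyC⟩ : ↥C) = y := Subtype.ext rfl
        exact hxy (heq ▸ hreach)
      have hcardAB : A.card + B.card = n - S.card := by
        rw [hBdef, Finset.card_sdiff_of_subset hAsub, Finset.card_compl, Fintype.card_fin]
        have := Finset.card_le_card hAsub
        rw [Finset.card_compl, Fintype.card_fin] at this
        omega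
      have hApos : 1 ≤ A.card := Finset.card_pos.2 ⟨_, hxA⟩
      have hBpos : 1 ≤ B.card := Finset.card_pos.2 ⟨_, hyB⟩
      -- choose subsets A' ⊆ A, B' ⊆ B with |A'| + |B'| = D + 1
      obtain ⟨A', hA'sub, hA'card⟩ :=
        Finset.exists_subset_card_eq (s := A) (n := min A.card D) (by omega)
      obtain ⟨B', hB'sub, hB'card⟩ :=
        Finset.exists_subset_card_eq (s := B) (n := D + 1 - min A.card D) (by omega)
      have liA : LinearIndependent ℝ (fun i : A' => v i) :=
        hli_small A' (by omega)
      have liB : LinearIndependent ℝ (fun i : B' => v i) :=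
        hli_small B' (by omega)
      have horth : ∀ a : A', ∀ b : B', ⟪v a, v b⟫ = 0 := by
        intro a b
        have haA : (a : Fin n) ∈ A := hA'sub a.2
        have hbB : (b : Fin n) ∈ B := hB'sub b.2
        have hne : (a : Fin n) ≠ (b : Fin n) := by
          intro h
          exact (Finset.mem_sdiff.1 hbB).2 (h ▸ haA)
        exact hOR _ _ hne (hnadj _ haA _ hbB)
      have hdisj : Disjoint (Submodule.span ℝ (Set.range fun a : A' => v a))
          (Submodule.span ℝ (Set.range fun b : B' => v b)) := by
        refine Submodule.IsOrtho.disjoint ?_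
        rw [Submodule.isOrtho_span]
        rintro _ ⟨a, rfl⟩ _ ⟨b, rfl⟩
        exact horth a b
      have hsum : LinearIndependent ℝ
          (Sum.elim (fun a : A' => v a) (fun b : B' => v b)) :=
        liA.sum_type liB hdisj
      have hcard := hsum.fintype_card_le_finrank
      rw [finrank_euclideanSpace_fin] at hcard
      rw [Fintype.card_sum, Fintype.card_coe, Fintype.card_coe] at hcard
      omega
    · -- nonempty
      have : (Sᶜ : Finset (Fin n)).Nonempty := by
        rw [← Finset.card_pos, Finset.card_compl, Fintype.card_fin]
        omega
      obtain ⟨a, ha⟩ := this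
      exact ⟨⟨a, (hcompl a).2 ha⟩⟩
end

section
/- Let G be an (n-D)-connected graph on n vertices and let σ be an ordering of the vertices (a bijection [n] → [n]). If D ≤ i < n, then σ(i) and σ(i+1) are connected in G by a path all of whose vertices lie in {σ(1), ..., σ(i+1)}. -/
/-- in an `(n-D)`-connected graph, consecutive vertices
`σ(i), σ(i+1)` of an ordering (with `D ≤ i`, 1-indexed; here the two vertices
are at 0-indexed positions `i-1` and `i`, written `k` and `k+1` with
`D ≤ k+1`) are joined by a path using only vertices among the first `i+1`
vertices of the ordering. -/
theorem stmt3 {n D : ℕ} (G : SimpleGraph (Fin n))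
    (hcon : IsKConnected G (n - D)) (σ : Equiv.Perm (Fin n))
    (k : ℕ) (hk : k + 1 < n) (hD : D ≤ k + 1) :
    ∃ p : G.Walk (σ ⟨k, by omega⟩) (σ ⟨k + 1, hk⟩),
      ∀ x ∈ p.support, ∃ j : Fin n, j.val ≤ k + 1 ∧ σ j = x := by
  set S : Finset (Fin n) := (Finset.Ioi (⟨k + 1, hk⟩ : Fin n)).image σ with hS
  have hcard : S.card = n - 1 - (k + 1) := by
    rw [hS, Finset.card_image_of_injective _ σ.injective, Fin.card_Ioi]
  have hScard : S.card < n - D := by omega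
  have hconn := hcon.2 S hScard
  have hmem : ∀ x : Fin n, x ∈ ((↑S : Set (Fin n))ᶜ) ↔ (σ.symm x).val ≤ k + 1 := by
    intro x
    simp only [Set.mem_compl_iff, Finset.coe_image, Set.mem_image, Finset.mem_coe,
      Finset.mem_Ioi, hS, not_exists]
    constructor
    · intro h
      by_contra hc
      exact h (σ.symm x) ⟨by
        simp only [Fin.lt_def]; omega, by simp⟩
    · rintro h j ⟨hj1, hj2⟩
      have : j = σ.symm x := by simpa using congrArg σ.symm hj2
      subst this
      simp only [Fin.lt_def] at hj1
      omega
  have h1 : σ ⟨k, by omega⟩ ∈ ((↑S : Set (Fin n))ᶜ) := by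
    rw [hmem]; simp
  have h2 : σ ⟨k + 1, hk⟩ ∈ ((↑S : Set (Fin n))ᶜ) := by
    rw [hmem]; simp
  obtain ⟨q⟩ := hconn.preconnected ⟨_, h1⟩ ⟨_, h2⟩
  refine ⟨q.map (SimpleGraph.Embedding.induce _).toHom, ?_⟩
  intro x hx
  replace hx : x ∈ (q.map (SimpleGraph.Embedding.induce ((↑S : Set (Fin n))ᶜ)).toHom).support := hx
  rw [SimpleGraph.Walk.support_map, List.mem_map] at hx
  obtain ⟨⟨y, hy⟩, _, rfl⟩ := hx
  exact ⟨σ.symm y, (hmem y).1 hy, by simp⟩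
end

section
/- Let φ : R^N → R^M be a polynomial map, let S = φ(R^N), and let U be a nonempty subset of S whose complement in S is contained in the zero set of a polynomial f that does not vanish identically on S. Then U is dense in S in the Euclidean topology. -/
open MvPolynomial

/-- The evaluation of a multivariate real polynomial is analytic on all of `ℝ^n`. -/
lemma analyticOnNhd_eval {n : ℕ} (g : MvPolynomial (Fin n) ℝ) :
    AnalyticOnNhd ℝ (fun x : Fin n → ℝ => eval x g) Set.univ := by
  have h : AnalyticOnNhd ℝ (fun x : Fin n → ℝ => aeval (R := ℝ) x g) Set.univ := by
    apply AnalyticOnNhd.aeval_mvPolynomial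
    intro i
    exact fun x _ => (ContinuousLinearMap.proj (R := ℝ) (φ := fun _ : Fin n => ℝ) i).analyticAt x
  have he : ∀ x : Fin n → ℝ, aeval (R := ℝ) x g = eval x g := fun x => by
    rw [aeval_def, Algebra.algebraMap_self]; rfl
  simpa only [he] using h

/-- A nonvanishing-somewhere polynomial has dense nonvanishing set. -/
lemma dense_ne_zero {n : ℕ} (g : MvPolynomial (Fin n) ℝ) {x₀ : Fin n → ℝ}
    (hx₀ : eval x₀ g ≠ 0) : Dense {x : Fin n → ℝ | eval x g ≠ 0} := by
  intro x
  by_contra h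
  rw [mem_closure_iff_nhds] at h
  push_neg at h
  obtain ⟨t, ht, htd⟩ := h
  have hev : (fun y : Fin n → ℝ => eval y g) =ᶠ[nhds x] 0 := by
    filter_upwards [ht] with y hy
    by_contra hne
    exact Set.eq_empty_iff_forall_notMem.mp htd y ⟨hy, hne⟩
  have := (analyticOnNhd_eval g).eqOn_zero_of_preconnected_of_eventuallyEq_zero
    isPreconnected_univ (Set.mem_univ x) hev (Set.mem_univ x₀)
  exact hx₀ this

/-- let `φ : ℝ^N → ℝ^M` be a polynomial map, `S = φ(ℝ^N)`, and
`U ⊆ S` nonempty with `S \ U` contained in the zero set of a polynomial `f`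
that does not vanish identically on `S`.  Then `U` is dense in `S`. -/
theorem stmt7 {N M : ℕ} (φ : Fin M → MvPolynomial (Fin N) ℝ)
    (S : Set (Fin M → ℝ))
    (hS : S = Set.range (fun x : Fin N → ℝ => fun m : Fin M => eval x (φ m)))
    (U : Set (Fin M → ℝ)) (hUS : U ⊆ S) (hUne : U.Nonempty)
    (f : MvPolynomial (Fin M) ℝ)
    (hcompl : S \ U ⊆ {y | eval y f = 0})
    (hfS : ∃ y ∈ S, eval y f ≠ 0) :
    S ⊆ closure U := by
  set ψ : (Fin N → ℝ) → (Fin M → ℝ) := fun x m => eval x (φ m) with hψ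
  have hψc : Continuous ψ := continuous_pi fun m => by
    show Continuous fun a : Fin N → ℝ => eval a (φ m)
    exact MvPolynomial.continuous_eval (p := φ m)
  set g : MvPolynomial (Fin N) ℝ := bind₁ φ f with hg
  have hgev : ∀ x, eval x g = eval (ψ x) f := by
    intro x
    have he : ∀ (k : ℕ) (y : Fin k → ℝ) (p : MvPolynomial (Fin k) ℝ),
        eval y p = aeval y p := fun k y p => by rw [aeval_def, Algebra.algebraMap_self]; rfl
    simp only [hg, hψ, he]
    exact aeval_bind₁ x φ f
  obtain ⟨y₀, hy₀S, hy₀⟩ := hfS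
  rw [hS] at hy₀S
  obtain ⟨x₀, hx₀⟩ := hy₀S
  have hx₀g : eval x₀ g ≠ 0 := by rw [hgev]; exact hx₀ ▸ hy₀
  have hdense := dense_ne_zero g hx₀g
  -- the nonvanishing set maps into U
  have hmaps : ψ '' {x | eval x g ≠ 0} ⊆ U := by
    rintro _ ⟨x, hx, rfl⟩
    by_contra hnU
    have hmemS : ψ x ∈ S := by rw [hS]; exact ⟨x, rfl⟩
    have h2 := hcompl ⟨hmemS, hnU⟩
    exact hx (by rw [hgev x]; exact h2)
  intro y hyS
  rw [hS] at hyS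
  obtain ⟨x, hx⟩ := hyS
  have hxcl : x ∈ closure {x | eval x g ≠ 0} := hdense x
  have : ψ x ∈ closure (ψ '' {x | eval x g ≠ 0}) := by
    have := image_closure_subset_closure_image hψc (s := {x | eval x g ≠ 0})
    exact this ⟨x, hxcl, rfl⟩
  exact hx ▸ (closure_mono hmaps this)
end

section
/- Define two subsets A, B of a topological space X to be 'almost the same' (ATS) if A ∩ B is dense in A and dense in B. If A, B, C ⊆ R^D are semi-algebraic sets such that A and B are ATS, and B and C are ATS, then A and C are ATS. -/
/-- A semi-algebraic subset of `ℝ^D`: a finite union of finite intersections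
of sets cut out by a polynomial equality and a strict polynomial inequality. -/
def IsSemialgebraic {D : ℕ} (s : Set (Fin D → ℝ)) : Prop :=
  ∃ (m k : ℕ) (p q : Fin m → Fin k → MvPolynomial (Fin D) ℝ),
    s = ⋃ i, ⋂ j, {x | MvPolynomial.eval x (p i j) = 0 ∧
        0 < MvPolynomial.eval x (q i j)}

/-- Two subsets of a topological space are "almost the same" (ATS) if their
intersection is dense in each of them. -/
def ATS {X : Type*} [TopologicalSpace X] (A B : Set X) : Prop :=
  A ⊆ closure (A ∩ B) ∧ B ⊆ closure (A ∩ B)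


open MvPolynomial Set


private lemma continuous_mvpoly_eval {D : ℕ} (P : MvPolynomial (Fin D) ℝ) :
    Continuous fun x : Fin D → ℝ => MvPolynomial.eval x P := by
  induction P using MvPolynomial.induction_on with
  | C a => simpa using continuous_const
  | add p q hp hq => simp only [map_add]; exact hp.add hq
  | mul_X p n hp => simp only [map_mul, eval_X]; exact hp.mul (continuous_apply n)

private lemma finBaire {X : Type*} [TopologicalSpace X] {ι : Type*} [DecidableEq ι]
    (K : Set X) (s : Finset ι) (F : ι → Set X) (hF : ∀ i, IsClosed (F i)) :
    ∀ U : Set X, IsOpen U → (U ∩ K).Nonempty → (U ∩ K ⊆ ⋃ i ∈ s, F i) →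
    ∃ i ∈ s, ∃ V : Set X, IsOpen V ∧ V ⊆ U ∧ (V ∩ K).Nonempty ∧ V ∩ K ⊆ F i := by
  induction s using Finset.induction_on with
  | empty =>
    intro U _ hne hcov
    obtain ⟨x, hx⟩ := hne
    simpa using hcov hx
  | @insert a s ha ih =>
    intro U hU hne hcov
    by_cases hsub : U ∩ K ⊆ F a
    · exact ⟨a, Finset.mem_insert_self a s, U, hU, subset_rfl, hne, hsub⟩
    · obtain ⟨x, hxUK, hxF⟩ := not_subset.mp hsub
      have hU' : IsOpen (U \ F a) := hU.sdiff (hF a)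
      have hne' : ((U \ F a) ∩ K).Nonempty := ⟨x, ⟨hxUK.1, hxF⟩, hxUK.2⟩
      have hcov' : (U \ F a) ∩ K ⊆ ⋃ i ∈ s, F i := by
        intro y hy
        have := hcov ⟨hy.1.1, hy.2⟩
        simp only [Finset.mem_insert, mem_iUnion, exists_prop] at this ⊢
        rcases this with ⟨i, hi | hi, hyi⟩
        · exact absurd hyi (by simpa [hi] using hy.1.2)
        · exact ⟨i, hi, hyi⟩
      obtain ⟨i, his, V, hVo, hVU, hVne, hVF⟩ := ih (U \ F a) hU' hne' hcov'
      exact ⟨i, Finset.mem_insert_of_mem his, V, hVo, hVU.trans diff_subset, hVne, hVF⟩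

private lemma semialg_pocket {D : ℕ} {T : Set (Fin D → ℝ)} (hT : IsSemialgebraic T)
    (U : Set (Fin D → ℝ)) (hU : IsOpen U) (hne : (U ∩ closure T).Nonempty) :
    ∃ z ∈ T, ∃ V : Set (Fin D → ℝ), IsOpen V ∧ z ∈ V ∧ V ⊆ U ∧ V ∩ closure T ⊆ T := by
  obtain ⟨m, k, p, q, rfl⟩ := hT
  set Tp : Fin m → Set (Fin D → ℝ) :=
    fun i => ⋂ j, {x | MvPolynomial.eval x (p i j) = 0 ∧ 0 < MvPolynomial.eval x (q i j)}
    with hTp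
  set T : Set (Fin D → ℝ) := ⋃ i, Tp i with hTdef
  have hcovK : closure T ⊆ ⋃ i ∈ (Finset.univ : Finset (Fin m)), closure (Tp i) := by
    have : T ⊆ ⋃ i ∈ (Finset.univ : Finset (Fin m)), closure (Tp i) := by
      intro x hx
      obtain ⟨i, hi⟩ := mem_iUnion.mp hx
      exact mem_iUnion₂.mpr ⟨i, Finset.mem_univ i, subset_closure hi⟩
    refine closure_minimal this ?_
    exact (isClosed_biUnion_finset (fun i _ => isClosed_closure))
  obtain ⟨i, -, V, hVo, hVU, ⟨w, hwV, hwK⟩, hVF⟩ :=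
    finBaire (closure T) Finset.univ (fun i => closure (Tp i))
      (fun i => isClosed_closure) U hU hne (fun x hx => hcovK hx.2)
  -- w ∈ V ∩ closure T ⊆ closure (Tp i); pick z ∈ Tp i ∩ V
  have hwTi : w ∈ closure (Tp i) := hVF ⟨hwV, hwK⟩
  obtain ⟨z, hzV, hzTi⟩ := mem_closure_iff.mp hwTi V hVo hwV
  -- the open "inequality" part
  set Q : Set (Fin D → ℝ) := ⋂ j, {x | 0 < MvPolynomial.eval x (q i j)} with hQ
  have hQo : IsOpen Q := by
    refine isOpen_iInter_of_finite fun j => ?_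
    exact isOpen_lt continuous_const (continuous_mvpoly_eval (q i j))
  have hzQ : z ∈ Q := by
    refine mem_iInter.mpr fun j => ?_
    exact (mem_iInter.mp hzTi j).2
  -- the closed "equality" part
  set Z : Set (Fin D → ℝ) := ⋂ j, {x | MvPolynomial.eval x (p i j) = 0} with hZ
  have hZc : IsClosed Z := by
    refine isClosed_iInter fun j => ?_
    exact isClosed_eq (continuous_mvpoly_eval (p i j)) continuous_const
  have hTiZ : closure (Tp i) ⊆ Z :=
    closure_minimal (fun x hx => mem_iInter.mpr fun j => (mem_iInter.mp hx j).1) hZc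
  have hZQ : Z ∩ Q ⊆ Tp i := by
    intro x hx
    exact mem_iInter.mpr fun j => ⟨mem_iInter.mp hx.1 j, mem_iInter.mp hx.2 j⟩
  refine ⟨z, mem_iUnion.mpr ⟨i, hzTi⟩, V ∩ Q, hVo.inter hQo, ⟨hzV, hzQ⟩,
    (inter_subset_left).trans hVU, ?_⟩
  intro x hx
  have hxTi : x ∈ Tp i := hZQ ⟨hTiZ (hVF ⟨hx.1.1, hx.2⟩), hx.1.2⟩
  exact mem_iUnion.mpr ⟨i, hxTi⟩

private lemma key_dense {D : ℕ} {S T : Set (Fin D → ℝ)} (hT : IsSemialgebraic T)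
    (h : closure S = closure T) : S ⊆ closure (S ∩ T) := by
  intro x hx
  rw [mem_closure_iff]
  intro U hU hxU
  have hx' : x ∈ closure T := h ▸ subset_closure hx
  obtain ⟨z, hzT, V, hVo, hzV, hVU, hVsub⟩ := semialg_pocket hT U hU ⟨x, hxU, hx'⟩
  have hzS : z ∈ closure S := by rw [h]; exact subset_closure hzT
  obtain ⟨s, hsV, hsS⟩ := mem_closure_iff.mp hzS V hVo hzV
  have hsT : s ∈ T := hVsub ⟨hsV, h ▸ subset_closure hsS⟩
  exact ⟨s, hVU hsV, hsS, hsT⟩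

/-- ATS is transitive on semi-algebraic subsets of `ℝ^D`. -/
theorem stmt8 {D : ℕ} (A B C : Set (Fin D → ℝ))
    (hA : IsSemialgebraic A) (hB : IsSemialgebraic B) (hC : IsSemialgebraic C)
    (hAB : ATS A B) (hBC : ATS B C) : ATS A C := by
  have h1 : closure A = closure (A ∩ B) :=
    subset_antisymm (closure_minimal hAB.1 isClosed_closure) (closure_mono inter_subset_left)
  have h2 : closure B = closure (A ∩ B) :=
    subset_antisymm (closure_minimal hAB.2 isClosed_closure) (closure_mono inter_subset_right)
  have h3 : closure B = closure (B ∩ C) :=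
    subset_antisymm (closure_minimal hBC.1 isClosed_closure) (closure_mono inter_subset_left)
  have h4 : closure C = closure (B ∩ C) :=
    subset_antisymm (closure_minimal hBC.2 isClosed_closure) (closure_mono inter_subset_right)
  have hAC : closure A = closure C := by rw [h1, ← h2, h3, ← h4]
  constructor
  · exact key_dense hC hAC
  · have := key_dense hA hAC.symm
    rwa [inter_comm] at this
end

section
/- Let A and B be semi-algebraic subsets of R^D with A dense in B. Then there exists a subset U ⊆ A that is open in B and dense in B. -/
/-- If a nonempty open set is covered by finitely many closed sets, one of the
closed sets has interior meeting the open set. -/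
lemma aux_finite_baire {X : Type*} [TopologicalSpace X] {n : ℕ} (C : Fin n → Set X)
    (hC : ∀ i, IsClosed (C i)) :
    ∀ (s : Finset (Fin n)) (W : Set X), IsOpen W → W.Nonempty →
      W ⊆ ⋃ i ∈ s, C i → ∃ i ∈ s, (W ∩ interior (C i)).Nonempty := by
  intro s
  induction s using Finset.induction with
  | empty =>
      intro W _ hne hsub
      obtain ⟨x, hx⟩ := hne
      simpa using hsub hx
  | @insert a s ha ih =>
      intro W hW hne hsub
      by_cases h : (W \ C a).Nonempty
      · obtain ⟨i, his, hi⟩ := ih (W \ C a) (hW.sdiff (hC a)) h (by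
          intro x hx
          have := hsub hx.1
          simp only [Finset.mem_insert, Set.mem_iUnion] at this ⊢
          rcases this with ⟨i, hi, hxi⟩
          rcases hi with rfl | hi
          · exact absurd hxi hx.2
          · exact ⟨i, hi, hxi⟩)
        exact ⟨i, Finset.mem_insert_of_mem his,
          hi.mono (Set.inter_subset_inter_left _ Set.diff_subset)⟩
      · refine ⟨a, Finset.mem_insert_self a s, ?_⟩
        have hWC : W ⊆ C a := by
          intro x hx
          by_contra hxc
          exact h ⟨x, hx, hxc⟩
        have hWint : W ⊆ interior (C a) := hW.subset_interior_iff.mpr hWC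
        obtain ⟨x, hx⟩ := hne
        exact ⟨x, hx, hWint hx⟩

/-- A dense finite union of locally closed sets contains an open dense set. -/
lemma aux_open_dense {X : Type*} [TopologicalSpace X] {n : ℕ} (C O : Fin n → Set X)
    (hC : ∀ i, IsClosed (C i)) (hO : ∀ i, IsOpen (O i))
    (hdense : Dense (⋃ i, C i ∩ O i)) :
    ∃ U : Set X, U ⊆ (⋃ i, C i ∩ O i) ∧ IsOpen U ∧ Dense U := by
  set A : Fin n → Set X := fun i => C i ∩ O i with hA
  refine ⟨⋃ i, interior (closure (A i)) ∩ O i, ?_, ?_, ?_⟩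
  · refine Set.iUnion_mono fun i => ?_
    intro x hx
    have hxC : x ∈ C i := by
      have : closure (A i) ⊆ C i := (hC i).closure_subset_iff.mpr Set.inter_subset_left
      exact this (interior_subset hx.1)
    exact ⟨hxC, hx.2⟩
  · exact isOpen_iUnion fun i => isOpen_interior.inter (hO i)
  · rw [dense_iff_inter_open]
    intro W hW hne
    have hcover : W ⊆ ⋃ i ∈ (Finset.univ : Finset (Fin n)), closure (A i) := by
      intro x hx
      have hx1 : x ∈ closure (⋃ i, A i) := hdense x
      rw [closure_iUnion_of_finite] at hx1
      simpa using hx1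
    obtain ⟨i, _, x, hxW, hxint⟩ :=
      aux_finite_baire (fun i => closure (A i)) (fun i => isClosed_closure)
        Finset.univ W hW hne hcover
    -- x ∈ W ∩ interior (closure (A i)); this open set meets A i since ⊆ closure (A i)
    have hV : IsOpen (W ∩ interior (closure (A i))) := hW.inter isOpen_interior
    have hVsub : W ∩ interior (closure (A i)) ⊆ closure (A i) :=
      fun y hy => interior_subset hy.2
    obtain ⟨y, hyV, hyA⟩ : ((W ∩ interior (closure (A i))) ∩ A i).Nonempty := by
      by_contra hemp
      rw [Set.not_nonempty_iff_eq_empty] at hemp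
      have : x ∉ closure (A i) := by
        intro hx
        rw [mem_closure_iff] at hx
        obtain ⟨z, hz1, hz2⟩ := hx _ hV ⟨hxW, hxint⟩
        exact absurd (Set.mem_inter hz1 hz2) (by simp [hemp])
      exact this (hVsub ⟨hxW, hxint⟩)
    exact ⟨y, hyV.1, Set.mem_iUnion.mpr ⟨i, hyV.2, hyA.2⟩⟩

/-- if `A ⊆ B` are semi-algebraic with `A` dense in `B`, then
there is a subset `U ⊆ A` that is open in the subspace topology on `B` and
dense in `B`. -/
theorem stmt9 {D : ℕ} (A B : Set (Fin D → ℝ))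
    (hA : IsSemialgebraic A) (hB : IsSemialgebraic B)
    (hAB : A ⊆ B) (hdense : B ⊆ closure A) :
    ∃ U : Set (Fin D → ℝ), U ⊆ A ∧
      (∃ V : Set (Fin D → ℝ), IsOpen V ∧ U = V ∩ B) ∧
      B ⊆ closure U := by
  obtain ⟨m, k, p, q, hAeq⟩ := hA
  -- ambient closed and open pieces
  set C : Fin m → Set (Fin D → ℝ) :=
    fun i => ⋂ j, {x | MvPolynomial.eval x (p i j) = 0} with hCdef
  set O : Fin m → Set (Fin D → ℝ) :=
    fun i => ⋂ j, {x | 0 < MvPolynomial.eval x (q i j)} with hOdef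
  have hCclosed : ∀ i, IsClosed (C i) := fun i =>
    isClosed_iInter fun j =>
      isClosed_eq (MvPolynomial.continuous_eval (p i j)) continuous_const
  have hOopen : ∀ i, IsOpen (O i) := fun i =>
    isOpen_iInter_of_finite fun j =>
      isOpen_lt continuous_const (MvPolynomial.continuous_eval (q i j))
  have hAeq' : A = ⋃ i, C i ∩ O i := by
    rw [hAeq]
    refine Set.iUnion_congr fun i => ?_
    ext x
    simp [hCdef, hOdef, Set.mem_iInter, forall_and]
  -- work in the subtype B
  set ι : B → (Fin D → ℝ) := fun b => (b : Fin D → ℝ) with hι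
  have hAdenseB : Dense (⋃ i, (ι ⁻¹' C i) ∩ (ι ⁻¹' O i)) := by
    intro b
    have : (⋃ i, (ι ⁻¹' C i) ∩ (ι ⁻¹' O i)) = ι ⁻¹' A := by
      rw [hAeq']
      simp [Set.preimage_iUnion, Set.preimage_inter]
    rw [this, closure_subtype]
    have himg : ι '' (ι ⁻¹' A) = A := by
      rw [Set.image_preimage_eq_inter_range, Subtype.range_coe]
      exact Set.inter_eq_left.mpr hAB
    rw [himg]
    exact hdense b.2
  obtain ⟨U', hU'sub, hU'open, hU'dense⟩ :=
    aux_open_dense (fun i => ι ⁻¹' C i) (fun i => ι ⁻¹' O i)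
      (fun i => (hCclosed i).preimage continuous_subtype_val)
      (fun i => (hOopen i).preimage continuous_subtype_val)
      hAdenseB
  obtain ⟨V, hVopen, hVpre⟩ := isOpen_induced_iff.mp hU'open
  refine ⟨ι '' U', ?_, ⟨V, hVopen, ?_⟩, ?_⟩
  · intro x hx
    obtain ⟨b, hb, rfl⟩ := hx
    have := hU'sub hb
    rw [hAeq']
    simp only [Set.mem_iUnion, Set.mem_preimage, Set.mem_inter_iff] at this ⊢
    obtain ⟨i, h1, h2⟩ := this
    exact ⟨i, h1, h2⟩
  · rw [← hVpre, Set.image_preimage_eq_inter_range, Subtype.range_coe]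
  · intro b hb
    have : (⟨b, hb⟩ : B) ∈ closure U' := hU'dense _
    rwa [closure_subtype] at this
end

section
/- Let A, B, C be semi-algebraic subsets of R^D with A and B both dense in C. Then A ∩ B is dense in C. -/
/-- In a Baire space, a dense set which is a finite union of locally closed
sets contains a dense open subset. -/
theorem aux_dense_open {X : Type*} [TopologicalSpace X] [BaireSpace X]
    {m : ℕ} (U F : Fin m → Set X) (hU : ∀ i, IsOpen (U i))
    (hF : ∀ i, IsClosed (F i)) (hd : Dense (⋃ i, U i ∩ F i)) :
    ∃ W, IsOpen W ∧ W ⊆ (⋃ i, U i ∩ F i) ∧ Dense W := by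
  set L : Fin m → Set X := fun i => U i ∩ F i with hL
  have hcov : (⋃ i, closure (L i)) = Set.univ := by
    apply Set.eq_univ_of_univ_subset
    rw [← hd.closure_eq]
    exact closure_minimal (Set.iUnion_mono fun i => subset_closure)
      (isClosed_iUnion_of_finite fun i => isClosed_closure)
  have hD0 : Dense (⋃ i, interior (closure (L i))) :=
    dense_iUnion_interior_of_closed (fun i => isClosed_closure) hcov
  refine ⟨⋃ i, U i ∩ interior (closure (L i)),
    isOpen_iUnion fun i => (hU i).inter isOpen_interior, ?_, ?_⟩
  · refine Set.iUnion_mono fun i x hx => ?_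
    have hclF : closure (L i) ⊆ F i :=
      closure_minimal Set.inter_subset_right (hF i)
    exact ⟨hx.1, hclF (interior_subset hx.2)⟩
  · rw [dense_iff_inter_open]
    intro V hV hVne
    obtain ⟨x, hxV, hxD⟩ := (dense_iff_inter_open.mp hD0) V hV hVne
    obtain ⟨i, hxi⟩ := Set.mem_iUnion.mp hxD
    have hVo : IsOpen (V ∩ interior (closure (L i))) := hV.inter isOpen_interior
    have hxcl : x ∈ closure (L i) := interior_subset hxi
    obtain ⟨y, ⟨hyV, hyint⟩, hyL⟩ :=
      mem_closure_iff.mp hxcl _ hVo ⟨hxV, hxi⟩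
    exact ⟨y, hyV, Set.mem_iUnion.mpr ⟨i, hyL.1, hyint⟩⟩

/-- A semi-algebraic set is a finite union of locally closed sets. -/
theorem IsSemialgebraic.exists_locally_closed {D : ℕ} {s : Set (Fin D → ℝ)}
    (hs : IsSemialgebraic s) :
    ∃ (m : ℕ) (U F : Fin m → Set (Fin D → ℝ)),
      (∀ i, IsOpen (U i)) ∧ (∀ i, IsClosed (F i)) ∧ s = ⋃ i, U i ∩ F i := by
  obtain ⟨m, k, p, q, hs⟩ := hs
  refine ⟨m, fun i => ⋂ j, {x | 0 < MvPolynomial.eval x (q i j)},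
    fun i => ⋂ j, {x | MvPolynomial.eval x (p i j) = 0}, ?_, ?_, ?_⟩
  · intro i
    exact isOpen_iInter_of_finite fun j =>
      isOpen_lt continuous_const (MvPolynomial.continuous_eval _)
  · intro i
    exact isClosed_iInter fun j =>
      isClosed_eq (MvPolynomial.continuous_eval _) continuous_const
  · rw [hs]
    refine Set.iUnion_congr fun i => ?_
    ext x
    simp only [Set.mem_iInter, Set.mem_inter_iff, Set.mem_setOf_eq]
    exact ⟨fun h => ⟨fun j => (h j).2, fun j => (h j).1⟩, fun h j => ⟨h.2 j, h.1 j⟩⟩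

/-- if `A` and `B` are semi-algebraic subsets of `C`, each dense
in the semi-algebraic set `C`, then `A ∩ B` is dense in `C`. -/
theorem stmt10 {D : ℕ} (A B C : Set (Fin D → ℝ))
    (hA : IsSemialgebraic A) (hB : IsSemialgebraic B) (hC : IsSemialgebraic C)
    (hAC : A ⊆ C) (hBC : B ⊆ C)
    (hdA : C ⊆ closure A) (hdB : C ⊆ closure B) :
    C ⊆ closure (A ∩ B) := by
  -- Work in the Baire space X = closure C.
  set X : Set (Fin D → ℝ) := closure C with hX
  haveI : CompleteSpace X := isClosed_closure.completeSpace_coe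
  have key : ∀ (S : Set (Fin D → ℝ)), IsSemialgebraic S → S ⊆ C → C ⊆ closure S →
      ∃ W : Set X, IsOpen W ∧ W ⊆ Subtype.val ⁻¹' S ∧ Dense W := by
    intro S hS hSC hdS
    obtain ⟨m, U, F, hU, hF, hSeq⟩ := hS.exists_locally_closed
    have hdense : Dense (⋃ i, (Subtype.val ⁻¹' U i : Set X) ∩ Subtype.val ⁻¹' F i) := by
      intro x
      rw [closure_subtype]
      have him : Subtype.val '' (⋃ i, (Subtype.val ⁻¹' U i : Set X) ∩ Subtype.val ⁻¹' F i)
          = S ∩ X := by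
        simp only [← Set.preimage_inter]
        rw [← Set.preimage_iUnion, ← hSeq,
          Set.image_preimage_eq_inter_range, Subtype.range_coe]
      rw [him]
      have hSX : S ∩ X = S := Set.inter_eq_left.mpr
        (hSC.trans subset_closure)
      rw [hSX]
      have hx2 : (x : Fin D → ℝ) ∈ closure C := x.2
      have hsub : closure C ⊆ closure S := by
        rw [← closure_closure (s := S)]
        exact closure_mono hdS
      exact hsub hx2
    obtain ⟨W, hWo, hWsub, hWd⟩ := aux_dense_open
      (fun i => (Subtype.val ⁻¹' U i : Set X)) (fun i => Subtype.val ⁻¹' F i)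
      (fun i => (hU i).preimage continuous_subtype_val)
      (fun i => (hF i).preimage continuous_subtype_val) hdense
    refine ⟨W, hWo, ?_, hWd⟩
    intro x hx
    have := hWsub hx
    rw [Set.mem_iUnion] at this
    obtain ⟨i, h1, h2⟩ := this
    have : (x : Fin D → ℝ) ∈ ⋃ i, U i ∩ F i := Set.mem_iUnion.mpr ⟨i, h1, h2⟩
    rwa [← hSeq] at this
  obtain ⟨WA, hWAo, hWAsub, hWAd⟩ := key A hA hAC hdA
  obtain ⟨WB, hWBo, hWBsub, hWBd⟩ := key B hB hBC hdB
  have hABd : Dense (WA ∩ WB) := hWAd.inter_of_isOpen_left hWBd hWAo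
  intro c hc
  have hcX : c ∈ X := subset_closure hc
  have hx : (⟨c, hcX⟩ : X) ∈ closure (WA ∩ WB) := hABd _
  rw [closure_subtype] at hx
  refine closure_mono ?_ hx
  rintro y ⟨z, ⟨hz1, hz2⟩, rfl⟩
  exact ⟨hWAsub hz1, hWBsub hz2⟩
end

section
/- Let G be a graph on [n] and σ, τ orderings of [n] that agree except for swapping positions i and i+1, where {σ(i), σ(i+1)} is an edge of G. Then the set of orthogonal representations obtainable by the sequential construction using σ equals the set obtainable using τ. -/
open scoped Classical

/-- The set `GOR⁺_σ` of outputs of the sequential construction: at each step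
`i`, the vector at `σ i` lies in the orthogonal complement of the span of the
vectors at the preceding non-neighbors of `σ i` if those vectors are linearly
independent, and is the zero vector otherwise. -/
def GORplus {n D : ℕ} (G : SimpleGraph (Fin n)) (σ : Equiv.Perm (Fin n)) :
    Set (Fin n → EuclideanSpace ℝ (Fin D)) :=
  {v | ∀ i : Fin n,
    (LinearIndependent ℝ
        (fun j : {j : Fin n // j < i ∧ ¬ G.Adj (σ j) (σ i)} => v (σ j)) ∧
      v (σ i) ∈ (Submodule.span ℝ
        (v ∘ σ '' {j : Fin n | j < i ∧ ¬ G.Adj (σ j) (σ i)}))ᗮ) ∨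
    (¬ LinearIndependent ℝ
        (fun j : {j : Fin n // j < i ∧ ¬ G.Adj (σ j) (σ i)} => v (σ j)) ∧
      v (σ i) = 0)}

/-- The set of vertices preceding `σ k` in the ordering `σ` and non-adjacent to it. -/
def vset {n : ℕ} (G : SimpleGraph (Fin n)) (σ : Equiv.Perm (Fin n)) (k : Fin n) :
    Set (Fin n) := {x | σ.symm x < k ∧ ¬ G.Adj x (σ k)}

lemma image_eq_vset {n : ℕ} (G : SimpleGraph (Fin n)) (σ : Equiv.Perm (Fin n)) (k : Fin n) :
    σ '' {j : Fin n | j < k ∧ ¬ G.Adj (σ j) (σ k)} = vset G σ k := by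
  ext x
  constructor
  · rintro ⟨j, ⟨h1, h2⟩, rfl⟩
    exact ⟨by simpa using h1, by simpa using h2⟩
  · rintro ⟨h1, h2⟩
    exact ⟨σ.symm x, ⟨h1, by simpa using h2⟩, by simp⟩

/-- The condition at one step, phrased in terms of the vertex and the vertex set. -/
def Cond {n D : ℕ} (v : Fin n → EuclideanSpace ℝ (Fin D)) (a : Fin n) (S : Set (Fin n)) : Prop :=
  (LinearIndependent ℝ (fun x : S => v x) ∧
      v a ∈ (Submodule.span ℝ (v '' S))ᗮ) ∨
  (¬ LinearIndependent ℝ (fun x : S => v x) ∧ v a = 0)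

noncomputable def vsetEquiv {n : ℕ} (G : SimpleGraph (Fin n)) (σ : Equiv.Perm (Fin n)) (k : Fin n) :
    {j : Fin n // j < k ∧ ¬ G.Adj (σ j) (σ k)} ≃ vset G σ k where
  toFun j := ⟨σ j, by
    obtain ⟨h1, h2⟩ := j.2
    exact ⟨by simpa using h1, h2⟩⟩
  invFun x := ⟨σ.symm x, by
    obtain ⟨h1, h2⟩ := x.2
    exact ⟨h1, by simpa using h2⟩⟩
  left_inv j := by simp
  right_inv x := by simp

lemma mem_GORplus_iff {n D : ℕ} (G : SimpleGraph (Fin n)) (σ : Equiv.Perm (Fin n))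
    (v : Fin n → EuclideanSpace ℝ (Fin D)) :
    v ∈ GORplus G σ ↔ ∀ k : Fin n, Cond v (σ k) (vset G σ k) := by
  have hli : ∀ k : Fin n,
      LinearIndependent ℝ (fun j : {j : Fin n // j < k ∧ ¬ G.Adj (σ j) (σ k)} => v (σ j)) ↔
      LinearIndependent ℝ (fun x : vset G σ k => v x) := by
    intro k
    rw [← linearIndependent_equiv (vsetEquiv G σ k)]
    rfl
  have hsp : ∀ k : Fin n,
      (v ∘ σ '' {j : Fin n | j < k ∧ ¬ G.Adj (σ j) (σ k)}) = v '' vset G σ k := by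
    intro k
    rw [Set.image_comp, image_eq_vset]
  constructor
  · intro h k
    rcases h k with ⟨h1, h2⟩ | ⟨h1, h2⟩
    · exact Or.inl ⟨(hli k).mp h1, by rw [← hsp k]; exact h2⟩
    · exact Or.inr ⟨fun hc => h1 ((hli k).mpr hc), h2⟩
  · intro h k
    rcases h k with ⟨h1, h2⟩ | ⟨h1, h2⟩
    · exact Or.inl ⟨(hli k).mpr h1, by rw [hsp k]; exact h2⟩
    · exact Or.inr ⟨fun hc => h1 ((hli k).mp hc), h2⟩

/-- if the orderings `σ` and `τ` differ only by swapping the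
adjacent positions `i` and `i+1`, and the vertices `σ(i)`, `σ(i+1)` are
adjacent in `G`, then the sequential construction produces the same set of
orthogonal representations for both orderings. -/
theorem stmt18 {n D : ℕ} (G : SimpleGraph (Fin n))
    (σ τ : Equiv.Perm (Fin n)) (i : Fin n) (hi : i.val + 1 < n)
    (hswap1 : σ i = τ ⟨i.val + 1, hi⟩) (hswap2 : σ ⟨i.val + 1, hi⟩ = τ i)
    (hagree : ∀ j : Fin n, j ≠ i → j ≠ ⟨i.val + 1, hi⟩ → σ j = τ j)
    (hadj : G.Adj (σ i) (σ ⟨i.val + 1, hi⟩)) :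
    (GORplus G σ : Set (Fin n → EuclideanSpace ℝ (Fin D))) = GORplus G τ := by
  set i' : Fin n := ⟨i.val + 1, hi⟩ with hi'
  set π : Equiv.Perm (Fin n) := Equiv.swap i i' with hπ
  have hii : i < i' := by
    rw [hi']; exact Fin.lt_def.mpr (Nat.lt_succ_self _)
  have hii' : i ≠ i' := ne_of_lt hii
  -- key order fact: for q ∉ {i, i'}, q < i ↔ q < i' and i < q ↔ i' < q
  have hlt1 : ∀ q : Fin n, q ≠ i → (q < i ↔ q < i') := by
    intro q hq
    constructor
    · intro h; exact lt_trans h hii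
    · intro h
      have h' : q.val < i.val + 1 := by
        have := Fin.lt_def.mp h; rwa [hi'] at this
      exact Fin.lt_def.mpr (lt_of_le_of_ne (Nat.lt_succ_iff.mp h')
        (fun hc => hq (Fin.ext hc)))
  have hlt2 : ∀ q : Fin n, q ≠ i' → (i < q ↔ i' < q) := by
    intro q hq
    constructor
    · intro h
      have h' : i.val < q.val := Fin.lt_def.mp h
      rw [hi']
      exact Fin.lt_def.mpr (lt_of_le_of_ne h' (fun hc => hq (Fin.ext hc.symm)))
    · intro h; exact lt_trans hii h
  -- σ k = τ (π k)
  have hστ : ∀ k : Fin n, σ k = τ (π k) := by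
    intro k
    by_cases hk1 : k = i
    · rw [hk1, hπ, Equiv.swap_apply_left]; exact hswap1
    by_cases hk2 : k = i'
    · rw [hk2, hπ, Equiv.swap_apply_right]; exact hswap2
    · rw [hπ, Equiv.swap_apply_of_ne_of_ne hk1 hk2]; exact hagree k hk1 hk2
  have hσsymm : ∀ x : Fin n, σ.symm x = π (τ.symm x) := by
    intro x
    rw [Equiv.symm_apply_eq, hστ]
    simp [hπ]
  -- the vertex sets match under the reindexing π
  have hvset : ∀ k : Fin n, vset G σ k = vset G τ (π k) := by
    intro k
    ext x
    simp only [vset, Set.mem_setOf_eq, hστ k, hσsymm x]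
    set p := τ.symm x with hp
    have hxp : x = τ p := by rw [hp, Equiv.apply_symm_apply]
    constructor
    · rintro ⟨h1, h2⟩
      refine ⟨?_, h2⟩
      by_cases hk1 : k = i
      · -- π k = i'; h1 : π p < i, goal p < i'
        rw [hk1, hπ, Equiv.swap_apply_left]
        rw [hk1] at h1
        by_cases hp1 : p = i
        · exfalso
          apply h2
          rw [hxp, hp1, ← hswap2, ← hστ k, hk1]
          exact hadj.symm
        by_cases hp2 : p = i'
        · rw [hp2, hπ, Equiv.swap_apply_right] at h1
          exact absurd h1 (lt_irrefl i)
        · rw [hπ, Equiv.swap_apply_of_ne_of_ne hp1 hp2] at h1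
          exact (hlt1 p hp1).mp h1
      by_cases hk2 : k = i'
      · -- π k = i; h1 : π p < i', goal p < i
        rw [hk2, hπ, Equiv.swap_apply_right]
        rw [hk2] at h1
        by_cases hp1 : p = i
        · rw [hp1, hπ, Equiv.swap_apply_left] at h1
          exact absurd h1 (lt_irrefl i')
        by_cases hp2 : p = i'
        · exfalso
          apply h2
          rw [hxp, hp2, ← hswap1, ← hστ k, hk2]
          exact hadj
        · rw [hπ, Equiv.swap_apply_of_ne_of_ne hp1 hp2] at h1
          exact (hlt1 p hp1).mpr h1
      · -- π k = k
        rw [hπ, Equiv.swap_apply_of_ne_of_ne hk1 hk2]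
        by_cases hp1 : p = i
        · rw [hp1, hπ, Equiv.swap_apply_left] at h1
          rw [hp1]
          have : i' ≤ k := le_of_lt h1
          exact lt_of_lt_of_le hii this
        by_cases hp2 : p = i'
        · rw [hp2, hπ, Equiv.swap_apply_right] at h1
          rw [hp2]
          -- i < k, k ≠ i' ⇒ i' < k
          exact (hlt2 k hk2).mp h1
        · rwa [hπ, Equiv.swap_apply_of_ne_of_ne hp1 hp2] at h1
    · rintro ⟨h1, h2⟩
      refine ⟨?_, h2⟩
      by_cases hk1 : k = i
      · -- h1 : p < π i = i', goal : π p < i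
        rw [hk1, hπ, Equiv.swap_apply_left] at h1
        rw [hk1]
        by_cases hp1 : p = i
        · exfalso
          apply h2
          rw [hxp, hp1, ← hswap2, ← hστ k, hk1]
          exact hadj.symm
        by_cases hp2 : p = i'
        · exact absurd (hp2 ▸ h1) (lt_irrefl i')
        · rw [hπ, Equiv.swap_apply_of_ne_of_ne hp1 hp2]
          exact (hlt1 p hp1).mpr h1
      by_cases hk2 : k = i'
      · -- h1 : p < π i' = i, goal : π p < i'
        rw [hk2, hπ, Equiv.swap_apply_right] at h1
        rw [hk2]
        by_cases hp1 : p = i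
        · exact absurd (hp1 ▸ h1) (lt_irrefl i)
        by_cases hp2 : p = i'
        · exfalso
          apply h2
          rw [hxp, hp2, ← hswap1, ← hστ k, hk2]
          exact hadj
        · rw [hπ, Equiv.swap_apply_of_ne_of_ne hp1 hp2]
          exact (hlt1 p hp1).mp h1
      · rw [hπ, Equiv.swap_apply_of_ne_of_ne hk1 hk2] at h1
        by_cases hp1 : p = i
        · rw [hp1] at h1
          rw [hp1, hπ, Equiv.swap_apply_left]
          exact (hlt2 k hk2).mp h1
        by_cases hp2 : p = i'
        · rw [hp2] at h1
          rw [hp2, hπ, Equiv.swap_apply_right]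
          exact lt_trans hii h1
        · rwa [hπ, Equiv.swap_apply_of_ne_of_ne hp1 hp2]
  -- conclude
  ext v
  rw [mem_GORplus_iff, mem_GORplus_iff]
  constructor
  · intro h k
    have hthis := h (π k)
    rw [hστ (π k), hvset (π k), hπ, Equiv.swap_apply_self] at hthis
    exact hthis
  · intro h k
    rw [hστ k, hvset k]
    exact h (π k)
end
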